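/- Let N be a square-free positive integer and let m be a positive integer with gcd(m,N) = 1. Then for any two distinct elements ω, ω' of Ω(m), the sets Γ₀(N)⁺·ω and Γ₀(N)⁺·ω' (products of matrices taken inside the 2×2 real matrices) are disjoint. -/

import Mathlib

lemma sqfree_nat_eq (e f x y : ℕ) (he : Squarefree e) (hf : Squarefree f) (hx : x ≠ 0)
    (h : f * x ^ 2 = e * y ^ 2) : e = f := by
  have he0 : e ≠ 0 := he.ne_zero
  have hf0 : f ≠ 0 := hf.ne_zero
  have hy : y ≠ 0 := by
    rintro rfl
    simp [hf0, hx] at h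
  refine Nat.eq_of_factorization_eq he0 hf0 fun p => ?_
  have h1 := congrArg (fun n => Nat.factorization n p) h
  simp only [Nat.factorization_mul hf0 (pow_ne_zero 2 hx),
    Nat.factorization_mul he0 (pow_ne_zero 2 hy), Nat.factorization_pow,
    Finsupp.add_apply, Finsupp.smul_apply, smul_eq_mul] at h1
  have h2 := (Nat.squarefree_iff_factorization_le_one he0).1 he p
  have h3 := (Nat.squarefree_iff_factorization_le_one hf0).1 hf p
  omega

lemma sqfree_int_eq {N : ℕ} (hN : Squarefree N) (e f x y : ℤ) (he : 0 < e) (hf : 0 < f)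
    (heN : e ∣ (N : ℤ)) (hfN : f ∣ (N : ℤ)) (hx : x ≠ 0) (h : f * x ^ 2 = e * y ^ 2) :
    e = f := by
  have heN' : e.natAbs ∣ N := by
    have := Int.natAbs_dvd_natAbs.mpr heN
    simpa using this
  have hfN' : f.natAbs ∣ N := by
    have := Int.natAbs_dvd_natAbs.mpr hfN
    simpa using this
  have hse : Squarefree e.natAbs := hN.squarefree_of_dvd heN'
  have hsf : Squarefree f.natAbs := hN.squarefree_of_dvd hfN'
  have hnat : f.natAbs * x.natAbs ^ 2 = e.natAbs * y.natAbs ^ 2 := by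
    have := congrArg Int.natAbs h
    simpa [Int.natAbs_mul, Int.natAbs_pow] using this
  have := sqfree_nat_eq e.natAbs f.natAbs x.natAbs y.natAbs hse hsf
    (by simpa using hx) hnat
  omega

lemma cross_sq (e f u v : ℝ) (he : 0 < e) (hf : 0 < f)
    (h : (Real.sqrt f)⁻¹ * v = (Real.sqrt e)⁻¹ * u) : e * v ^ 2 = f * u ^ 2 := by
  have hse : (0:ℝ) < Real.sqrt e := Real.sqrt_pos.mpr he
  have hsf : (0:ℝ) < Real.sqrt f := Real.sqrt_pos.mpr hf
  have h2 : Real.sqrt e * v = Real.sqrt f * u := by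
    field_simp at h
    linarith
  have h3 := congrArg (fun t => t ^ 2) h2
  simp only [mul_pow] at h3
  rw [Real.sq_sqrt he.le, Real.sq_sqrt hf.le] at h3
  exact h3

lemma cross_eq (e u v : ℝ) (he : 0 < e)
    (h : (Real.sqrt e)⁻¹ * v = (Real.sqrt e)⁻¹ * u) : v = u := by
  have hse : (Real.sqrt e)⁻¹ ≠ 0 := inv_ne_zero (Real.sqrt_pos.mpr he).ne'
  exact mul_left_cancel₀ hse h

/-- The Fricke group `Γ₀(N)⁺`, as a set of `2 × 2` real matrices: matrices of the form
`e^{-1/2} • !![a, b; c, d]` with `a, b, c, d, e` integers, `a*d - b*c = e`, `e ∣ N`,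
`e ∣ a`, `e ∣ d` and `N ∣ c`. -/
noncomputable def FrickeGroup (N : ℕ) : Set (Matrix (Fin 2) (Fin 2) ℝ) :=
  {M | ∃ a b c d e : ℤ, 0 < e ∧ a * d - b * c = e ∧ e ∣ (N : ℤ) ∧ e ∣ a ∧ e ∣ d ∧
    (N : ℤ) ∣ c ∧ M = (Real.sqrt (e : ℝ))⁻¹ • !![(a : ℝ), (b : ℝ); (c : ℝ), (d : ℝ)]}

/-- The set `Ω(m)` of integer matrices `!![a, b; 0, d]` with `d > 0`, `a*d = m`,
`gcd(a, b, d) = 1` and `0 ≤ b < d`, regarded as real matrices. -/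
def OmegaSet (m : ℕ) : Set (Matrix (Fin 2) (Fin 2) ℝ) :=
  {M | ∃ a b d : ℤ, 0 < d ∧ a * d = (m : ℤ) ∧ Int.gcd a (Int.gcd b d) = 1 ∧
    0 ≤ b ∧ b < d ∧ M = !![(a : ℝ), (b : ℝ); 0, (d : ℝ)]}

/-- For `N` squarefree, `m` positive coprime to `N`, and distinct `ω, ω' ∈ Ω(m)`,
the sets `Γ₀(N)⁺ · ω` and `Γ₀(N)⁺ · ω'` are disjoint. -/
theorem frickeGroup_cosets_disjoint (N m : ℕ) (hN : Squarefree N) (hNpos : 0 < N)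
    (hm : 0 < m) (hcop : Nat.Coprime m N) :
    ∀ ω ∈ OmegaSet m, ∀ ω' ∈ OmegaSet m, ω ≠ ω' →
      Disjoint ((fun g => g * ω) '' FrickeGroup N) ((fun g => g * ω') '' FrickeGroup N) := by
  rintro ω ⟨a, b, d, hd, had, -, hb0, hbd, rfl⟩ ω' ⟨a', b', d', hd', had', -, hb0', hbd', rfl⟩ hne
  rw [Set.disjoint_left]
  rintro x ⟨g, ⟨α, β, γ, δ, e, he, hdet, heN, heα, heδ, hNγ, rfl⟩, rfl⟩
    ⟨g', ⟨α', β', γ', δ', e', he', hdet', heN', heα', heδ', hNγ', hg'⟩, heq⟩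
  simp only at heq
  rw [hg'] at heq
  simp only [smul_mul_assoc, Matrix.mul_fin_two, mul_zero, add_zero] at heq
  -- positive integers
  have hm0 : (0:ℤ) < (m:ℤ) := by exact_mod_cast hm
  have ha0 : a ≠ 0 := by rintro rfl; simp at had; omega
  have ha0' : a' ≠ 0 := by rintro rfl; simp at had'; omega
  have heR : (0:ℝ) < (e:ℝ) := by exact_mod_cast he
  have heR' : (0:ℝ) < (e':ℝ) := by exact_mod_cast he'
  -- entrywise equations over ℝ
  have h00 : (Real.sqrt e')⁻¹ * ((α':ℝ) * a') = (Real.sqrt e)⁻¹ * ((α:ℝ) * a) := by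
    have := congrFun (congrFun heq 0) 0
    simpa using this
  have h01 : (Real.sqrt e')⁻¹ * ((α':ℝ) * b' + (β':ℝ) * d') =
      (Real.sqrt e)⁻¹ * ((α:ℝ) * b + (β:ℝ) * d) := by
    have := congrFun (congrFun heq 0) 1
    simpa using this
  have h10 : (Real.sqrt e')⁻¹ * ((γ':ℝ) * a') = (Real.sqrt e)⁻¹ * ((γ:ℝ) * a) := by
    have := congrFun (congrFun heq 1) 0
    simpa using this
  have h11 : (Real.sqrt e')⁻¹ * ((γ':ℝ) * b' + (δ':ℝ) * d') =
      (Real.sqrt e)⁻¹ * ((γ:ℝ) * b + (δ:ℝ) * d) := by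
    have := congrFun (congrFun heq 1) 1
    simpa using this
  -- e = e'
  have hee : e = e' := by
    rcases eq_or_ne α 0 with hα | hα
    · have hγ : γ ≠ 0 := by
        rintro rfl
        rw [hα] at hdet
        simp at hdet
        omega
      have hS := cross_sq (e:ℝ) (e':ℝ) _ _ heR heR' h10
      have hSi : (e':ℤ) * (γ * a) ^ 2 = e * (γ' * a') ^ 2 := by exact_mod_cast hS.symm
      exact sqfree_int_eq hN e e' (γ * a) (γ' * a') he he' heN heN'
        (mul_ne_zero hγ ha0) hSi
    · have hS := cross_sq (e:ℝ) (e':ℝ) _ _ heR heR' h00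
      have hSi : (e':ℤ) * (α * a) ^ 2 = e * (α' * a') ^ 2 := by exact_mod_cast hS.symm
      exact sqfree_int_eq hN e e' (α * a) (α' * a') he he' heN heN'
        (mul_ne_zero hα ha0) hSi
  subst hee
  -- integer entry equations
  have E00 : α' * a' = α * a := by exact_mod_cast cross_eq _ _ _ heR h00
  have E01 : α' * b' + β' * d' = α * b + β * d := by exact_mod_cast cross_eq _ _ _ heR h01
  have E10 : γ' * a' = γ * a := by exact_mod_cast cross_eq _ _ _ heR h10
  have E11 : γ' * b' + δ' * d' = γ * b + δ * d := by exact_mod_cast cross_eq _ _ _ heR h11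
  -- divisibility facts
  have heγ : e ∣ γ := heN.trans hNγ
  have heγ' : e ∣ γ' := heN.trans hNγ'
  -- the key quantities
  have hx : (δ' * α - β' * γ) * a = e * a' := by
    linear_combination (-δ') * E00 + β' * E10 + a' * hdet'
  have hαγ : γ' * α = α' * γ := by
    have h := mul_left_cancel₀ ha0 (show a * (γ' * α) = a * (α' * γ) by
      linear_combination (-γ') * E00 + α' * E10)
    exact h
  have hy : (α' * δ - γ' * β) * d = e * d' := by
    linear_combination (-α') * E11 + γ' * E01 + d' * hdet' + b * hαγ
  have hxy : (δ' * α - β' * γ) * (α' * δ - γ' * β) * (m:ℤ) = e * e * (m:ℤ) := by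
    have h := congrArg₂ (· * ·) hx hy
    calc (δ' * α - β' * γ) * (α' * δ - γ' * β) * (m:ℤ)
        = ((δ' * α - β' * γ) * a) * ((α' * δ - γ' * β) * d) := by rw [← had]; ring
      _ = (e * a') * (e * d') := h
      _ = e * e * (a' * d') := by ring
      _ = e * e * (m:ℤ) := by rw [had']
  have hxy2 : (δ' * α - β' * γ) * (α' * δ - γ' * β) = e * e :=
    mul_right_cancel₀ hm0.ne' hxy
  obtain ⟨u, hu⟩ : e ∣ (δ' * α - β' * γ) :=
    dvd_sub (heδ'.mul_right α) ((heγ.mul_left β'))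
  obtain ⟨v, hv⟩ : e ∣ (α' * δ - γ' * β) :=
    dvd_sub (heα'.mul_right δ) ((heγ'.mul_right β))
  have huv : u * v = 1 := by
    have h := hxy2
    rw [hu, hv] at h
    have he2 : e * e ≠ 0 := mul_ne_zero he.ne' he.ne'
    have : (e * e) * (u * v) = (e * e) * 1 := by linarith [h]
    exact mul_left_cancel₀ he2 (by linear_combination h)
  have hvd : v * d = d' := by
    rw [hv] at hy
    exact mul_left_cancel₀ he.ne' (by linear_combination hy)
  have hua : u * a = a' := by
    rw [hu] at hx
    exact mul_left_cancel₀ he.ne' (by linear_combination hx)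
  have hv1 : v = 1 := by
    rcases Int.eq_one_or_neg_one_of_mul_eq_one' huv with ⟨_, h1⟩ | ⟨_, h1⟩
    · exact h1
    · exfalso; rw [h1] at hvd; linarith
  have hu1 : u = 1 := by
    rw [hv1, mul_one] at huv; exact huv
  have haa : a' = a := by rw [hu1, one_mul] at hua; exact hua.symm
  have hdd : d' = d := by rw [hv1, one_mul] at hvd; exact hvd.symm
  rw [hdd] at E01 E11
  have hxe : δ' * α - β' * γ = e := by rw [hu, hu1, mul_one]
  have hz : (δ' * β - β' * δ) * d = e * (b' - b) := by
    linear_combination (-δ') * E01 + β' * E11 + b' * hdet' - b * hxe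
  obtain ⟨w, hw⟩ : e ∣ (δ' * β - β' * δ) :=
    dvd_sub (heδ'.mul_right β) (heδ.mul_left β')
  have hwd : w * d = b' - b := by
    rw [hw] at hz
    exact mul_left_cancel₀ he.ne' (by linear_combination hz)
  have hw1 : w < 1 := lt_of_mul_lt_mul_right (by rw [hwd, one_mul]; linarith) hd.le
  have hw2 : -1 < w := lt_of_mul_lt_mul_right (by rw [hwd, neg_one_mul]; linarith) hd.le
  have hbb : b' = b := by
    have : w = 0 := by omega
    rw [this, zero_mul] at hwd
    omega
  exact hne (by rw [haa, hbb, hdd])
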